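/- Let n, p, q be finite index types, let A be a real n×p matrix, B a real n×q matrix, and m ∈ ℝⁿ. Set M = fromBlocks (Aᵀ·A) (Aᵀ·B) (Bᵀ·A) (Bᵀ·B), a matrix indexed by p ⊕ q. Then the matrices 1ₙ + A·Aᵀ + B·Bᵀ and 1 + M are positive definite (hence invertible), and ⟨m, (1ₙ + A·Aᵀ + B·Bᵀ)⁻¹ m⟩ = ‖m‖² − ⟨v, (1 + M)⁻¹ v⟩, where v ∈ ℝ^(p⊕q) is the vector whose p-block is Aᵀ·m and whose q-block is Bᵀ·m, ⟨u, w⟩ denotes the Euclidean dot product, and ‖m‖² = ⟨m, m⟩. -/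

import Mathlib

open Matrix

lemma posDef_one_add_self_mul_transpose {k l : Type*} [Fintype k] [Fintype l] [DecidableEq k]
    (C : Matrix k l ℝ) : (1 + C * Cᵀ).PosDef := by
  have hs : (C * Cᵀ).PosSemidef := by
    simpa [conjTranspose_eq_transpose_of_trivial] using posSemidef_self_mul_conjTranspose C
  refine PosDef.of_dotProduct_mulVec_pos (Matrix.isHermitian_one.add hs.1) fun x hx => ?_
  have h1 := (Matrix.PosDef.one (n := k) (R := ℝ)).dotProduct_mulVec_pos hx
  have h2 := (posSemidef_iff_dotProduct_mulVec.mp hs).2 x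
  simp only [add_mulVec, dotProduct_add] at *
  linarith

lemma woodbury_aux {k l : Type*} [Fintype k] [Fintype l] [DecidableEq k] [DecidableEq l]
    (C : Matrix k l ℝ) :
    (1 + C * Cᵀ)⁻¹ = 1 - C * (1 + Cᵀ * C)⁻¹ * Cᵀ := by
  have h2 : (1 + Cᵀ * C).PosDef := by
    have := posDef_one_add_self_mul_transpose Cᵀ
    simpa using this
  have h2' : IsUnit (1 + Cᵀ * C) := h2.isUnit
  apply inv_eq_right_inv
  have key : (1 + C * Cᵀ) * (1 - C * (1 + Cᵀ * C)⁻¹ * Cᵀ)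
      = 1 + C * Cᵀ - (C * (1 + Cᵀ * C)) * ((1 + Cᵀ * C)⁻¹ * Cᵀ) := by
    simp only [Matrix.mul_sub, Matrix.sub_mul, Matrix.mul_add, Matrix.add_mul,
      Matrix.mul_one, Matrix.one_mul, Matrix.mul_assoc]
  rw [key, Matrix.mul_assoc, ← Matrix.mul_assoc (1 + Cᵀ * C),
    Matrix.mul_nonsing_inv _ ((Matrix.isUnit_iff_isUnit_det _).mp h2'), Matrix.one_mul]
  abel

theorem inner_inv_one_add_mul_transpose_add_mul_transpose
    {n p q : Type*} [Fintype n] [Fintype p] [Fintype q]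
    [DecidableEq n] [DecidableEq p] [DecidableEq q]
    (A : Matrix n p ℝ) (B : Matrix n q ℝ) (m : n → ℝ) :
    (1 + A * Aᵀ + B * Bᵀ).PosDef ∧
    (1 + Matrix.fromBlocks (Aᵀ * A) (Aᵀ * B) (Bᵀ * A) (Bᵀ * B)).PosDef ∧
    m ⬝ᵥ ((1 + A * Aᵀ + B * Bᵀ)⁻¹ *ᵥ m) =
      m ⬝ᵥ m -
        (Sum.elim (Aᵀ *ᵥ m) (Bᵀ *ᵥ m)) ⬝ᵥ
          ((1 + Matrix.fromBlocks (Aᵀ * A) (Aᵀ * B) (Bᵀ * A) (Bᵀ * B))⁻¹ *ᵥ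
            Sum.elim (Aᵀ *ᵥ m) (Bᵀ *ᵥ m)) := by
  set C : Matrix n (p ⊕ q) ℝ := fromCols A B with hC
  have hCt : Cᵀ = fromRows Aᵀ Bᵀ := transpose_fromCols A B
  have h1 : A * Aᵀ + B * Bᵀ = C * Cᵀ := by rw [hC, hCt, fromCols_mul_fromRows]
  have h2 : Matrix.fromBlocks (Aᵀ * A) (Aᵀ * B) (Bᵀ * A) (Bᵀ * B) = Cᵀ * C := by
    rw [hC, hCt, fromRows_mul_fromCols]
  have hv : Sum.elim (Aᵀ *ᵥ m) (Bᵀ *ᵥ m) = Cᵀ *ᵥ m := by rw [hCt, fromRows_mulVec]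
  rw [add_assoc, h1, h2, hv]
  refine ⟨posDef_one_add_self_mul_transpose C,
    by simpa using posDef_one_add_self_mul_transpose Cᵀ, ?_⟩
  rw [woodbury_aux, Matrix.sub_mulVec, Matrix.one_mulVec, dotProduct_sub,
    ← Matrix.mulVec_mulVec, ← Matrix.mulVec_mulVec, dotProduct_mulVec m C,
    ← Matrix.mulVec_transpose]
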